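/- For any symmetric n×n integer matrix R and indices i ≠ j, det(R + 2(ε_{ij} + ε_{ji})) ≡ det(R) (mod 4), where ε_{ij} is the elementary matrix with a 1 in position (i,j) and zeros elsewhere. -/

import Mathlib

open Matrix

theorem stmt_3 {n : ℕ} (R : Matrix (Fin n) (Fin n) ℤ) (hR : Rᵀ = R)
    (i j : Fin n) (hij : i ≠ j) :
    (R + 2 • (Matrix.single i j (1 : ℤ) + Matrix.single j i 1)).det
      ≡ R.det [ZMOD 4] := by
  classical
  set u : Fin n → ℤ := Pi.single j 1 with hu
  set v : Fin n → ℤ := Pi.single i 1 with hv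
  set z : Fin n → ℤ := (fun k => R k i) + (2 : ℤ) • u with hz
  set w : Fin n → ℤ := (fun k => R k j) + (2 : ℤ) • v with hw
  set A : Matrix (Fin n) (Fin n) ℤ := updateCol R i z with hA
  set B : Matrix (Fin n) (Fin n) ℤ := updateCol R j v with hB
  have hM : R + 2 • (Matrix.single i j (1 : ℤ) + Matrix.single j i 1)
      = updateCol A j w := by
    ext a b
    rcases eq_or_ne b j with rfl | hbj
    · simp [hA, hw, hv, updateCol_apply, hij.symm, Matrix.single,
        Pi.single_apply, hij, eq_comm]
    · rcases eq_or_ne b i with rfl | hbi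
      · simp [hA, hz, hu, updateCol_apply, hbj, Matrix.single,
          Pi.single_apply, hij, Ne.symm hbj, eq_comm]
      · simp [hA, updateCol_apply, hbj, hbi, Matrix.single,
          Ne.symm hbj, Ne.symm hbi]
  have hAj : updateCol A j (fun k => R k j) = A := by
    have : (fun k => R k j) = fun k => A k j := by
      funext k
      simp [hA, updateCol_apply, hij.symm]
    rw [this, updateCol_eq_self]
  have hcomm : updateCol A j v = updateCol B i z := by
    ext a b
    rcases eq_or_ne b j with rfl | hbj
    · simp [hA, hB, updateCol_apply, hij.symm]
    · rcases eq_or_ne b i with rfl | hbi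
      · simp [hA, hB, updateCol_apply, hbj, hij]
      · simp [hA, hB, updateCol_apply, hbj, hbi]
  have hBi : updateCol B i (fun k => R k i) = B := by
    have : (fun k => R k i) = fun k => B k i := by
      funext k
      simp [hB, updateCol_apply, hij]
    rw [this, updateCol_eq_self]
  -- expand determinant
  have e1 : (updateCol A j w).det
      = A.det + 2 * (updateCol A j v).det := by
    rw [hw, det_updateCol_add, det_updateCol_smul]
    congr 1
    exact congrArg det hAj
  have e2 : A.det = R.det + 2 * (updateCol R i u).det := by
    rw [hA, hz, det_updateCol_add, det_updateCol_smul, updateCol_eq_self]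
  have e3 : (updateCol A j v).det
      = (updateCol R j v).det + 2 * (updateCol B i u).det := by
    rw [hcomm, hz, det_updateCol_add, det_updateCol_smul]
    congr 1
    exact congrArg det hBi
  -- the two cofactor terms agree
  have c1 : (updateCol R i u).det = adjugate R j i := by
    rw [show updateCol R i u = (updateRow R i u)ᵀ from by
        rw [← updateCol_transpose, hR],
      det_transpose, hu, ← adjugate_apply]
  have c2 : (updateCol R j v).det = adjugate R i j := by
    rw [show updateCol R j v = (updateRow R j v)ᵀ from by
        rw [← updateCol_transpose, hR],
      det_transpose, hv, ← adjugate_apply]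
  have csym : adjugate R j i = adjugate R i j := by
    conv_lhs => rw [← hR, ← adjugate_transpose, transpose_apply]
  have key : (R + 2 • (Matrix.single i j (1 : ℤ) + Matrix.single j i 1)).det
      = R.det + 4 * (adjugate R i j + (updateCol B i u).det) := by
    rw [hM, e1, e2, e3, c1, c2, csym]; ring
  rw [key]
  exact (Int.modEq_iff_dvd.mpr ⟨-(adjugate R i j + (updateCol B i u).det), by ring⟩)
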